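/- arXiv:2409.04305 — 2 statements merged into one kernel-verified Lean document; each statement's English description precedes it below -/
import Mathlib

section
/- Let n' ≥ 1. For a noncrossing set partition π of [2n'] := {1,…,2n'} with blocks B_1,…,B_k having smallest elements a_1,…,a_k, let Λ(π) be the lattice path starting at (0,0) with 2n' steps, whose m-th step is (1, |B_i| − 1) if m = a_i for some i, and (1, −1) otherwise. Then Λ(π) is a Łukasiewicz path, and the map π ↦ Λ(π) restricts to a bijection from the set NC^even(2n') of even noncrossing set partitions of [2n'] onto the set L^odd(2n') of odd Łukasiewicz paths of length 2n'. Moreover, under this bijection: the m-th step of Λ(π) is an up step if and only if m is the smallest element of some block of π; if the m-th step of Λ(π) is a down step from an odd height 2s+1 to the even height 2s, then m is even and m is not the smallest element of any block of π; and if the m-th step is a down step from an even height 2s to the odd height 2s−1, then m is odd and m is not the smallest element of any block of π. -/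
open Finset

/-- A set partition of `{0,…,n-1}` (representing `[n] = {1,…,n}`) is noncrossing. -/
def IsNoncrossing {n : ℕ} (π : Finpartition (Finset.univ : Finset (Fin n))) : Prop :=
  ∀ a b c d : Fin n, a < b → b < c → c < d →
    ∀ B₁ ∈ π.parts, ∀ B₂ ∈ π.parts,
      a ∈ B₁ → c ∈ B₁ → b ∈ B₂ → d ∈ B₂ → B₁ = B₂

/-- All blocks have even cardinality. -/
def IsEvenPartition {n : ℕ} (π : Finpartition (Finset.univ : Finset (Fin n))) : Prop :=
  ∀ B ∈ π.parts, Even B.card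

/-- `m` is the smallest element of some block of `π`. -/
def IsBlockMin {n : ℕ} (π : Finpartition (Finset.univ : Finset (Fin n))) (m : Fin n) : Prop :=
  ∃ B ∈ π.parts, m ∈ B ∧ ∀ x ∈ B, m ≤ x

open Classical in
/-- The step sequence `Λ(π)` of a set partition `π` of `[n]`: the `m`-th step is
`(1, |B|-1)` if `m` is the smallest element of the block `B`, and `(1,-1)` otherwise.
(The step `(1,j)` is recorded by its vertical displacement `j`.) -/
noncomputable def lambdaMap {n : ℕ} (π : Finpartition (Finset.univ : Finset (Fin n)))
    (m : Fin n) : ℤ :=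
  if h : ∃ B ∈ π.parts, m ∈ B ∧ ∀ x ∈ B, m ≤ x then (h.choose.card : ℤ) - 1 else -1

/-- The height of the vertex of the path just before its (0-based) `m`-th step,
i.e. the sum of the first `m` vertical displacements. -/
noncomputable def pathHeight {n : ℕ} (f : Fin n → ℤ) (m : ℕ) : ℤ :=
  ∑ i ∈ Finset.univ.filter (fun j : Fin n => (j : ℕ) < m), f i

/-- `f` is the step sequence of a Łukasiewicz path of length `n`: every step is `(1,j)` with
`j ≥ -1`, the path never goes below the x-axis, and it ends at `(n,0)`. -/
def IsLukPath {n : ℕ} (f : Fin n → ℤ) : Prop :=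
  (∀ i, -1 ≤ f i) ∧ (∀ m : ℕ, m ≤ n → 0 ≤ pathHeight f m) ∧ pathHeight f n = 0

/-- `f` is the step sequence of an odd Łukasiewicz path: a Łukasiewicz path all of whose steps
are of the form `(1, 2k-1)` for some `k ≥ 0`. -/
def IsOddLukPath {n : ℕ} (f : Fin n → ℤ) : Prop :=
  IsLukPath f ∧ ∀ i, Odd (f i)

namespace LukAux
open Finset

variable {n : ℕ}

lemma pathHeight_zero (f : Fin n → ℤ) : pathHeight f 0 = 0 := by
  simp [pathHeight]

lemma filter_lt_succ {m : ℕ} (hm : m < n) :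
    (univ.filter fun j : Fin n => (j : ℕ) < m + 1) =
      insert ⟨m, hm⟩ (univ.filter fun j : Fin n => (j : ℕ) < m) := by
  ext j
  simp only [mem_filter, mem_univ, true_and, mem_insert]
  constructor
  · intro h
    rcases Nat.lt_succ_iff_lt_or_eq.1 h with h | h
    · exact Or.inr h
    · exact Or.inl (Fin.ext h)
  · rintro (h | h)
    · subst h; simp
    · omega

lemma pathHeight_succ (f : Fin n → ℤ) {m : ℕ} (hm : m < n) :
    pathHeight f (m + 1) = pathHeight f m + f ⟨m, hm⟩ := by
  unfold pathHeight
  rw [filter_lt_succ hm, sum_insert (by simp)]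
  ring

lemma card_filter_lt {m : ℕ} (hm : m ≤ n) :
    (univ.filter fun j : Fin n => (j : ℕ) < m).card = m := by
  induction m with
  | zero => simp
  | succ k ih =>
    rw [filter_lt_succ (by omega), card_insert_of_notMem (by simp)]
    rw [ih (by omega)]

end LukAux
namespace LukAux
open Finset

variable {n : ℕ} (π : Finpartition (Finset.univ : Finset (Fin n)))

/-- The minimum of the block containing `x`. -/
noncomputable def bmin (x : Fin n) : Fin n :=
  (π.part x).min' ⟨x, π.mem_part (mem_univ x)⟩

variable {π}

lemma bmin_mem (x : Fin n) : bmin π x ∈ π.part x := Finset.min'_mem _ _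

lemma bmin_le_of_mem {x y : Fin n} (h : y ∈ π.part x) : bmin π x ≤ y :=
  Finset.min'_le _ _ h

lemma bmin_le (x : Fin n) : bmin π x ≤ x := bmin_le_of_mem (π.mem_part (mem_univ x))

lemma part_congr {x y : Fin n} (h : y ∈ π.part x) : π.part y = π.part x :=
  π.part_eq_of_mem (π.part_mem.2 (mem_univ x)) h

lemma bmin_congr {x y : Fin n} (h : y ∈ π.part x) : bmin π y = bmin π x := by
  have hp : π.part y = π.part x := part_congr h
  unfold bmin
  congr 1

lemma isBlockMin_iff {m : Fin n} : IsBlockMin π m ↔ bmin π m = m := by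
  constructor
  · rintro ⟨B, hB, hmB, hle⟩
    have hpB : π.part m = B := π.part_eq_of_mem hB hmB
    exact le_antisymm (bmin_le m) (hle _ (hpB ▸ bmin_mem (π := π) m))
  · intro h
    exact ⟨π.part m, π.part_mem.2 (mem_univ m), π.mem_part (mem_univ m),
      fun x hx => h ▸ bmin_le_of_mem hx⟩

lemma lambdaMap_of_blockMin {m : Fin n} (h : IsBlockMin π m) :
    lambdaMap π m = ((π.part m).card : ℤ) - 1 := by
  have h' : ∃ B ∈ π.parts, m ∈ B ∧ ∀ x ∈ B, m ≤ x := h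
  unfold lambdaMap
  rw [dif_pos h']
  have hc := h'.choose_spec
  have : π.part m = h'.choose := π.part_eq_of_mem hc.1 hc.2.1
  rw [this]

lemma lambdaMap_of_not_blockMin {m : Fin n} (h : ¬ IsBlockMin π m) :
    lambdaMap π m = -1 := by
  unfold lambdaMap
  rw [dif_neg]
  exact h

/-- Elements whose block minimum is `< m`. -/
noncomputable def U (π : Finpartition (Finset.univ : Finset (Fin n))) (m : ℕ) : Finset (Fin n) :=
  univ.filter fun x => ((bmin π x : ℕ) < m)

/-- Elements `≥ m` whose block minimum is `< m` ("open tunnels at time m"). -/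
noncomputable def A (π : Finpartition (Finset.univ : Finset (Fin n))) (m : ℕ) : Finset (Fin n) :=
  univ.filter fun x => m ≤ (x : ℕ) ∧ ((bmin π x : ℕ) < m)

/-- Block minima `< m`. -/
noncomputable def M (π : Finpartition (Finset.univ : Finset (Fin n))) (m : ℕ) : Finset (Fin n) :=
  univ.filter fun i => (i : ℕ) < m ∧ bmin π i = i

lemma U_eq_biUnion (m : ℕ) : U π m = (M π m).biUnion π.part := by
  ext x
  simp only [U, M, mem_filter, mem_univ, true_and, mem_biUnion]
  constructor
  · intro hx
    refine ⟨bmin π x, ⟨hx, bmin_congr (bmin_mem x)⟩, ?_⟩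
    rw [part_congr (bmin_mem x)]
    exact π.mem_part (mem_univ x)
  · rintro ⟨i, ⟨him, hii⟩, hxi⟩
    have h1 : bmin π x = bmin π i := by
      have hpp : π.part x = π.part i := part_congr hxi
      unfold bmin
      congr 1
    rw [h1, hii]
    exact him

lemma M_pairwise (m : ℕ) : ∀ i ∈ M π m, ∀ j ∈ M π m, i ≠ j →
    Disjoint (π.part i) (π.part j) := by
  intro i hi j hj hij
  rw [Finset.disjoint_left]
  intro x hxi hxj
  apply hij
  have h1 : π.part i = π.part j :=
    π.eq_of_mem_parts (π.part_mem.2 (mem_univ i)) (π.part_mem.2 (mem_univ j)) hxi hxj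
  simp only [M, mem_filter] at hi hj
  have : i ∈ π.part j := h1 ▸ π.mem_part (mem_univ i)
  rw [← hi.2.2, ← hj.2.2, bmin_congr this]

lemma card_U (m : ℕ) : (U π m).card = ∑ i ∈ M π m, (π.part i).card := by
  rw [U_eq_biUnion, card_biUnion (M_pairwise m)]

lemma U_card_even (hev : IsEvenPartition π) (m : ℕ) : Even (U π m).card := by
  rw [card_U]
  apply Finset.even_sum
  intro i _
  exact hev _ (π.part_mem.2 (mem_univ i))

lemma height_add_eq {m : ℕ} (hm : m ≤ n) :
    pathHeight (lambdaMap π) m + (m : ℤ) = ((U π m).card : ℤ) := by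
  classical
  have h1 : pathHeight (lambdaMap π) m + (m : ℤ)
      = ∑ i ∈ univ.filter (fun j : Fin n => (j : ℕ) < m), (lambdaMap π i + 1) := by
    unfold pathHeight
    rw [Finset.sum_add_distrib, Finset.sum_const, nsmul_eq_mul, mul_one, card_filter_lt hm]
  rw [h1]
  have h2 : ∀ i ∈ univ.filter (fun j : Fin n => (j : ℕ) < m),
      lambdaMap π i + 1 = if bmin π i = i then ((π.part i).card : ℤ) else 0 := by
    intro i _
    by_cases h : bmin π i = i
    · rw [if_pos h, lambdaMap_of_blockMin (isBlockMin_iff.2 h)]; ring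
    · rw [if_neg h, lambdaMap_of_not_blockMin (fun hb => h (isBlockMin_iff.1 hb))]; ring
  rw [Finset.sum_congr rfl h2, ← Finset.sum_filter]
  have h3 : (univ.filter (fun j : Fin n => (j : ℕ) < m)).filter (fun i => bmin π i = i)
      = M π m := by
    simp [M, Finset.filter_filter]
  rw [h3, card_U]
  push_cast
  rfl

lemma U_eq_union (m : ℕ) :
    U π m = (univ.filter fun j : Fin n => (j : ℕ) < m) ∪ A π m := by
  ext x
  simp only [U, A, mem_filter, mem_univ, true_and, mem_union]
  have hb : ((bmin π x : ℕ)) ≤ (x : ℕ) := bmin_le (π := π) x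
  omega

lemma card_U_split {m : ℕ} (hm : m ≤ n) : ((U π m).card : ℤ) = m + (A π m).card := by
  rw [U_eq_union, Finset.card_union_of_disjoint, card_filter_lt hm]
  · push_cast; ring
  · rw [Finset.disjoint_left]
    intro x hx hx'
    simp only [A, mem_filter] at hx hx'
    omega

lemma height_eq_A {m : ℕ} (hm : m ≤ n) :
    pathHeight (lambdaMap π) m = ((A π m).card : ℤ) := by
  have := height_add_eq (π := π) hm
  rw [card_U_split hm] at this
  linarith

lemma A_top : A π n = ∅ := by
  ext x
  simp only [A, mem_filter, mem_univ, true_and, Finset.notMem_empty, iff_false]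
  have := x.isLt
  omega

lemma isLukPath_lambdaMap : IsLukPath (lambdaMap π) := by
  refine ⟨fun i => ?_, fun m hm => ?_, ?_⟩
  · by_cases h : IsBlockMin π i
    · rw [lambdaMap_of_blockMin h]
      have : 0 < (π.part i).card := card_pos.2 ⟨i, π.mem_part (mem_univ i)⟩
      omega
    · rw [lambdaMap_of_not_blockMin h]
  · rw [height_eq_A hm]; positivity
  · rw [height_eq_A le_rfl, A_top]; simp

lemma height_parity (hev : IsEvenPartition π) {m : ℕ} (hm : m ≤ n) :
    Even (pathHeight (lambdaMap π) m + m) := by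
  rw [height_add_eq hm]
  obtain ⟨k, hk⟩ := U_card_even hev (π := π) m
  exact ⟨k, by push_cast [hk]; ring⟩

end LukAux
namespace LukAux
open Finset

variable {n : ℕ}

/-- Candidate openers for a down step at `j`. -/
noncomputable def T (f : Fin n → ℤ) (j : Fin n) : Finset (Fin n) :=
  univ.filter fun i => i < j ∧ pathHeight f (i : ℕ) < pathHeight f (j : ℕ)

open Classical in
/-- The opener matched to a down step `j` (and `j` itself if `j` is not a down step). -/
noncomputable def opener (f : Fin n → ℤ) (j : Fin n) : Fin n :=
  if h : f j = -1 ∧ (T f j).Nonempty then (T f j).max' h.2 else j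

variable {f : Fin n → ℤ}

lemma height_pos_of_down (hL : IsLukPath f) {j : Fin n} (hj : f j = -1) :
    1 ≤ pathHeight f (j : ℕ) := by
  have hstep : pathHeight f ((j : ℕ) + 1) = pathHeight f (j : ℕ) + f j :=
    pathHeight_succ f j.isLt
  have h0 : 0 ≤ pathHeight f ((j : ℕ) + 1) := hL.2.1 _ (by omega)
  rw [hstep, hj] at h0
  omega

lemma T_nonempty (hL : IsLukPath f) {j : Fin n} (hj : f j = -1) : (T f j).Nonempty := by
  have h1 := height_pos_of_down hL hj
  have hj0 : 0 < (j : ℕ) := by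
    by_contra h
    have : (j : ℕ) = 0 := by omega
    rw [this] at h1
    rw [pathHeight_zero] at h1
    omega
  refine ⟨⟨0, j.isLt.trans_le' (Nat.zero_le _) |>.trans_le (le_refl _) ⟩, ?_⟩
  simp only [T, mem_filter, mem_univ, true_and]
  constructor
  · exact Fin.lt_def.2 (by simpa using hj0)
  · simpa [pathHeight_zero] using (by omega : 0 < pathHeight f (j : ℕ))

lemma opener_eq_max' (hL : IsLukPath f) {j : Fin n} (hj : f j = -1) :
    opener f j = (T f j).max' (T_nonempty hL hj) := by
  unfold opener
  rw [dif_pos ⟨hj, T_nonempty hL hj⟩]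

lemma opener_mem_T (hL : IsLukPath f) {j : Fin n} (hj : f j = -1) :
    opener f j ∈ T f j := by
  rw [opener_eq_max' hL hj]
  exact Finset.max'_mem _ _

lemma opener_lt (hL : IsLukPath f) {j : Fin n} (hj : f j = -1) : opener f j < j := by
  have := opener_mem_T hL hj
  simp only [T, mem_filter] at this
  exact this.2.1

lemma opener_height_lt (hL : IsLukPath f) {j : Fin n} (hj : f j = -1) :
    pathHeight f ((opener f j : ℕ)) < pathHeight f (j : ℕ) := by
  have := opener_mem_T hL hj
  simp only [T, mem_filter] at this
  exact this.2.2

lemma height_ge_of_between (hL : IsLukPath f) {j t : Fin n} (hj : f j = -1)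
    (h1 : opener f j < t) (h2 : t < j) : pathHeight f (j : ℕ) ≤ pathHeight f (t : ℕ) := by
  by_contra h
  push_neg at h
  have ht : t ∈ T f j := by
    simp only [T, mem_filter, mem_univ, true_and]
    exact ⟨h2, h⟩
  have := Finset.le_max' _ _ ht
  rw [← opener_eq_max' hL hj] at this
  exact absurd h1 (not_lt.2 this)

lemma opener_of_ne {j : Fin n} (hj : f j ≠ -1) : opener f j = j := by
  unfold opener
  rw [dif_neg (by tauto)]

lemma opener_le (j : Fin n) : opener f j ≤ j := by
  by_cases h : f j = -1 ∧ (T f j).Nonempty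
  · have : opener f j ∈ T f j := by
      unfold opener
      rw [dif_pos h]
      exact Finset.max'_mem _ _
    simp only [T, mem_filter] at this
    exact this.2.1.le
  · unfold opener
    rw [dif_neg h]

/-- Interior heights dominate: `H (opener j) < H j ≤ H t` for `opener j < t ≤ j`;
in particular the step at the opener goes up. -/
lemma opener_up (hL : IsLukPath f) {j : Fin n} (hj : f j = -1) :
    1 ≤ f (opener f j) := by
  set i := opener f j with hi
  have hij : i < j := opener_lt hL hj
  have hijn : (i : ℕ) < n := i.isLt
  have hstep : pathHeight f ((i : ℕ) + 1) = pathHeight f (i : ℕ) + f i :=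
    pathHeight_succ f hijn
  have hge : pathHeight f (j : ℕ) ≤ pathHeight f ((i : ℕ) + 1) := by
    rcases eq_or_lt_of_le (Nat.succ_le_of_lt (Fin.lt_def.1 hij)) with h | h
    · rw [show (j:ℕ) = (i:ℕ)+1 by omega]
    · have hn : (i : ℕ) + 1 < n := lt_trans h j.isLt
      have := height_ge_of_between hL hj (t := ⟨(i : ℕ) + 1, hn⟩)
        (Fin.lt_def.2 (by simp [hi])) (Fin.lt_def.2 (by simpa using h))
      simpa using this
  have hlt : pathHeight f (i : ℕ) < pathHeight f (j : ℕ) := opener_height_lt hL hj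
  omega

lemma opener_opener (hL : IsLukPath f) (j : Fin n) :
    opener f (opener f j) = opener f j := by
  by_cases h : f j = -1
  · exact opener_of_ne (by have := opener_up hL h; omega)
  · rw [opener_of_ne h, opener_of_ne h]

end LukAux
namespace LukAux
open Finset

variable {n : ℕ} {f : Fin n → ℤ}

lemma height_le_opener_succ (hL : IsLukPath f) {j : Fin n} (hj : f j = -1) :
    pathHeight f (j : ℕ) ≤ pathHeight f ((opener f j : ℕ) + 1) := by
  set i := opener f j with hi
  have hij : i < j := opener_lt hL hj
  rcases eq_or_lt_of_le (Nat.succ_le_of_lt (Fin.lt_def.1 hij)) with h | h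
  · rw [show (i : ℕ) + 1 = (j : ℕ) by omega]
  · have hn : (i : ℕ) + 1 < n := lt_trans h j.isLt
    have := height_ge_of_between hL hj (t := ⟨(i : ℕ) + 1, hn⟩)
      (Fin.lt_def.2 (by simp [hi])) (Fin.lt_def.2 (by simpa using h))
    simpa using this

lemma hdich (hL : IsLukPath f) (hodd : ∀ i, Odd (f i)) (i : Fin n) :
    f i = -1 ∨ 1 ≤ f i := by
  obtain ⟨k, hk⟩ := hodd i
  have := hL.1 i
  omega

/-- The down steps matched to the opener `i`. -/
noncomputable def D (f : Fin n → ℤ) (i : Fin n) : Finset (Fin n) :=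
  univ.filter fun b => f b = -1 ∧ opener f b = i

/-- The full block opened at `i`. -/
noncomputable def F (f : Fin n → ℤ) (i : Fin n) : Finset (Fin n) :=
  univ.filter fun b => opener f b = i

noncomputable instance kerDecidable (f : Fin n → ℤ) :
    DecidableRel (Setoid.ker (opener f)).r := fun _ _ => Classical.dec _

/-- The inverse map: the partition whose blocks are the fibers of `opener f`. -/
noncomputable def psi (f : Fin n → ℤ) : Finpartition (Finset.univ : Finset (Fin n)) :=
  Finpartition.ofSetoid (Setoid.ker (opener f))

lemma mem_part_psi {a b : Fin n} : b ∈ (psi f).part a ↔ opener f a = opener f b := by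
  unfold psi
  rw [Finpartition.mem_part_ofSetoid_iff_rel]
  rfl

lemma part_psi (a : Fin n) : (psi f).part a = F f (opener f a) := by
  ext b
  simp only [F, mem_filter, mem_univ, true_and, mem_part_psi, eq_comm]

lemma F_eq_insert (hL : IsLukPath f) (hodd : ∀ i, Odd (f i)) {i : Fin n} (hi : 1 ≤ f i) :
    F f i = insert i (D f i) := by
  ext b
  simp only [F, D, mem_filter, mem_univ, true_and, mem_insert]
  constructor
  · intro hb
    rcases hdich hL hodd b with h | h
    · exact Or.inr ⟨h, hb⟩
    · left
      rw [← hb, opener_of_ne (by omega)]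
  · rintro (rfl | ⟨_, hb⟩)
    · exact opener_of_ne (by omega)
    · exact hb

lemma not_mem_D {i : Fin n} (hi : 1 ≤ f i) : i ∉ D f i := by
  simp only [D, mem_filter, mem_univ, true_and, not_and]
  intro h
  omega

lemma card_D (hL : IsLukPath f) {i : Fin n} (hi : 1 ≤ f i) :
    ((D f i).card : ℤ) = f i := by
  have hn1 : 1 ≤ n := i.isLt.trans_le' (Nat.zero_le _) |>.trans_le (le_refl _) |> fun _ => Nat.one_le_iff_ne_zero.2 (by rintro rfl; exact absurd i.isLt (by omega))
  have hHsucc : pathHeight f ((i : ℕ) + 1) = pathHeight f (i : ℕ) + f i :=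
    pathHeight_succ f i.isLt
  have hcard : (D f i).card = (Finset.Icc (pathHeight f (i : ℕ) + 1)
      (pathHeight f (i : ℕ) + f i)).card := by
    apply Finset.card_bij (fun (j : Fin n) _ => pathHeight f (j : ℕ))
    · -- maps to
      intro j hj
      simp only [D, mem_filter, mem_univ, true_and] at hj
      obtain ⟨hdown, hop⟩ := hj
      rw [Finset.mem_Icc]
      constructor
      · have := opener_height_lt hL hdown
        rw [hop] at this
        omega
      · have := height_le_opener_succ hL hdown
        rw [hop, hHsucc] at this
        omega
    · -- injective
      have key : ∀ j j' : Fin n, j ∈ D f i → j' ∈ D f i → j < j' →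
          pathHeight f (j : ℕ) ≠ pathHeight f (j' : ℕ) := by
        intro j j' hj hj' hlt
        simp only [D, mem_filter, mem_univ, true_and] at hj hj'
        have hstep : pathHeight f ((j : ℕ) + 1) = pathHeight f (j : ℕ) + f j :=
          pathHeight_succ f j.isLt
        rw [hj.1] at hstep
        intro heq
        rcases eq_or_lt_of_le (Nat.succ_le_of_lt (Fin.lt_def.1 hlt)) with h | h
        · rw [show ((j' : ℕ)) = (j : ℕ) + 1 by omega] at heq
          omega
        · have hn2 : (j : ℕ) + 1 < n := lt_trans h j'.isLt
          have hge := height_ge_of_between hL hj'.1 (t := ⟨(j : ℕ) + 1, hn2⟩)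
            (Fin.lt_def.2 ?_) (Fin.lt_def.2 (by simpa using h))
          · have hge' : pathHeight f ((j' : ℕ)) ≤ pathHeight f ((j : ℕ) + 1) := hge
            rw [hstep] at hge'
            omega
          · simp only [hj'.2]
            have := Fin.lt_def.1 (opener_lt hL hj.1)
            rw [hj.2] at this
            omega
      intro j hj j' hj' heq
      rcases lt_trichotomy j j' with h | h | h
      · exact absurd heq (key j j' hj hj' h)
      · exact h
      · exact absurd heq.symm (key j' j hj' hj h)
    · -- surjective
      intro ℓ hℓ
      rw [Finset.mem_Icc] at hℓ
      obtain ⟨hl1, hl2⟩ := hℓ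
      have hHi0 : 0 ≤ pathHeight f (i : ℕ) := hL.2.1 _ (le_of_lt i.isLt)
      set S : Finset (Fin n) :=
        univ.filter (fun j' : Fin n => i < j' ∧ pathHeight f ((j' : ℕ) + 1) < ℓ) with hS
      have hlast : (⟨n - 1, by omega⟩ : Fin n) ∈ S := by
        simp only [hS, mem_filter, mem_univ, true_and]
        have hin : (i : ℕ) < n - 1 := by
          by_contra hcon
          have h1 : (i : ℕ) = n - 1 := by have := i.isLt; omega
          have h2 : (i : ℕ) + 1 = n := by omega
          rw [h2] at hHsucc
          rw [hL.2.2] at hHsucc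
          omega
        constructor
        · exact Fin.lt_def.2 (by simpa using hin)
        · show pathHeight f ((n - 1) + 1) < ℓ
          rw [show (n - 1) + 1 = n by omega, hL.2.2]
          omega
      have hSne : S.Nonempty := ⟨_, hlast⟩
      set j := S.min' hSne with hjdef
      have hjS : i < j ∧ pathHeight f ((j : ℕ) + 1) < ℓ := by
        have := S.min'_mem hSne
        simp only [hS, mem_filter, mem_univ, true_and] at this
        exact this
      have hHj : ℓ ≤ pathHeight f (j : ℕ) := by
        rcases eq_or_lt_of_le (Nat.succ_le_of_lt (Fin.lt_def.1 hjS.1)) with h | h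
        · rw [show (j : ℕ) = (i : ℕ) + 1 by omega, hHsucc]
          omega
        · set j0 : Fin n := ⟨(j : ℕ) - 1, by have := j.isLt; omega⟩ with hj0
          have hj0notS : j0 ∉ S := by
            intro hmem
            have := S.min'_le _ hmem
            rw [← hjdef] at this
            have := Fin.le_def.1 this
            simp only [hj0] at this
            omega
          simp only [hS, mem_filter, mem_univ, true_and, not_and, not_lt] at hj0notS
          have hij0 : i < j0 := Fin.lt_def.2 (by simp only [hj0]; omega)
          have := hj0notS hij0
          rw [show ((j0 : ℕ)) + 1 = (j : ℕ) by simp only [hj0]; omega] at this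
          exact this
      have hstepj : pathHeight f ((j : ℕ) + 1) = pathHeight f (j : ℕ) + f j :=
        pathHeight_succ f j.isLt
      have hdownj : f j = -1 := by
        have := hL.1 j
        omega
      have hHjeq : pathHeight f (j : ℕ) = ℓ := by omega
      have hopj : opener f j = i := by
        rw [opener_eq_max' hL hdownj]
        apply le_antisymm
        · apply Finset.max'_le
          intro t ht
          simp only [T, mem_filter, mem_univ, true_and] at ht
          obtain ⟨htj, hth⟩ := ht
          rw [hHjeq] at hth
          by_contra hcon
          push_neg at hcon
          rcases eq_or_lt_of_le (Nat.succ_le_of_lt (Fin.lt_def.1 hcon)) with h | h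
          · rw [show ((t : ℕ)) = (i : ℕ) + 1 by omega, hHsucc] at hth
            omega
          · set t0 : Fin n := ⟨(t : ℕ) - 1, by have := t.isLt; omega⟩ with ht0
            have ht0notS : t0 ∉ S := by
              intro hmem
              have := S.min'_le _ hmem
              rw [← hjdef] at this
              have h1 := Fin.le_def.1 this
              have h2 := Fin.lt_def.1 htj
              simp only [ht0] at h1
              omega
            simp only [hS, mem_filter, mem_univ, true_and, not_and, not_lt] at ht0notS
            have hit0 : i < t0 := Fin.lt_def.2 (by simp only [ht0]; omega)
            have := ht0notS hit0
            rw [show ((t0 : ℕ)) + 1 = (t : ℕ) by simp only [ht0]; omega] at this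
            omega
        · apply Finset.le_max'
          simp only [T, mem_filter, mem_univ, true_and]
          exact ⟨hjS.1, by omega⟩
      refine ⟨j, ?_, hHjeq⟩
      simp only [D, mem_filter, mem_univ, true_and]
      exact ⟨hdownj, hopj⟩
  rw [hcard, Int.card_Icc_of_le _ _ (by omega)]
  ring

lemma card_F (hL : IsLukPath f) (hodd : ∀ i, Odd (f i)) {i : Fin n} (hi : 1 ≤ f i) :
    ((F f i).card : ℤ) = f i + 1 := by
  rw [F_eq_insert hL hodd hi, Finset.card_insert_of_notMem (not_mem_D hi)]
  push_cast
  rw [card_D hL hi]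

end LukAux
namespace LukAux
open Finset

variable {n : ℕ} {f : Fin n → ℤ}

lemma opener_blockMin (hL : IsLukPath f) (hodd : ∀ i, Odd (f i)) (m : Fin n) :
    IsBlockMin (psi f) m ↔ 1 ≤ f m := by
  constructor
  · rintro ⟨B, hB, hmB, hle⟩
    by_contra h
    have hdown : f m = -1 := by
      rcases hdich hL hodd m with h' | h'
      · exact h'
      · omega
    have hBeq : (psi f).part m = B := (psi f).part_eq_of_mem hB hmB
    have hopm : opener f m ∈ B := by
      rw [← hBeq, mem_part_psi]
      exact (opener_opener hL m).symm
    have h1 := Fin.le_def.1 (hle _ hopm)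
    have h2 := Fin.lt_def.1 (opener_lt hL hdown)
    omega
  · intro hm
    refine ⟨(psi f).part m, (psi f).part_mem.2 (mem_univ m), (psi f).mem_part (mem_univ m),
      fun x hx => ?_⟩
    rw [mem_part_psi, opener_of_ne (by omega)] at hx
    rw [hx]
    exact opener_le x

lemma lambda_psi (hL : IsLukPath f) (hodd : ∀ i, Odd (f i)) :
    lambdaMap (psi f) = f := by
  funext m
  rcases hdich hL hodd m with h | h
  · rw [lambdaMap_of_not_blockMin (fun hb => by
      have := (opener_blockMin hL hodd m).1 hb; omega), h]
  · rw [lambdaMap_of_blockMin ((opener_blockMin hL hodd m).2 h)]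
    rw [part_psi, opener_of_ne (by omega), card_F hL hodd h]
    ring

lemma psi_even (hL : IsLukPath f) (hodd : ∀ i, Odd (f i)) : IsEvenPartition (psi f) := by
  intro B hB
  obtain ⟨a, ha⟩ := (psi f).nonempty_of_mem_parts hB
  have hBeq : (psi f).part a = B := (psi f).part_eq_of_mem hB ha
  have hup : 1 ≤ f (opener f a) := by
    rcases hdich hL hodd a with h | h
    · exact opener_up hL h
    · rw [opener_of_ne (by omega)]; exact h
  have hcard : ((B.card : ℤ)) = f (opener f a) + 1 := by
    rw [← hBeq, part_psi]
    exact card_F hL hodd hup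
  obtain ⟨k, hk⟩ := hodd (opener f a)
  exact ⟨(k + 1).toNat, by omega⟩

lemma psi_noncrossing (hL : IsLukPath f) (hodd : ∀ i, Odd (f i)) :
    IsNoncrossing (psi f) := by
  intro a b c d hab hbc hcd B₁ hB₁ B₂ hB₂ haB₁ hcB₁ hbB₂ hdB₂
  have hB₁eq : (psi f).part a = B₁ := (psi f).part_eq_of_mem hB₁ haB₁
  have hB₂eq : (psi f).part b = B₂ := (psi f).part_eq_of_mem hB₂ hbB₂
  have hac : opener f a = opener f c := mem_part_psi.1 (hB₁eq ▸ hcB₁)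
  have hbd : opener f b = opener f d := mem_part_psi.1 (hB₂eq ▸ hdB₂)
  have hac' : ((opener f a : ℕ)) = (opener f c : ℕ) := congrArg Fin.val hac
  have hbd' : ((opener f b : ℕ)) = (opener f d : ℕ) := congrArg Fin.val hbd
  have hia : (opener f a : ℕ) ≤ (a : ℕ) := Fin.le_def.1 (opener_le a)
  have hib : (opener f b : ℕ) ≤ (b : ℕ) := Fin.le_def.1 (opener_le b)
  have hab' := Fin.lt_def.1 hab
  have hbc' := Fin.lt_def.1 hbc
  have hcd' := Fin.lt_def.1 hcd
  have hcdown : f c = -1 := by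
    rcases hdich hL hodd c with h | h
    · exact h
    · exfalso
      have h1 : ((opener f c : ℕ)) = (c : ℕ) := congrArg Fin.val (opener_of_ne (by omega))
      omega
  have hddown : f d = -1 := by
    rcases hdich hL hodd d with h | h
    · exact h
    · exfalso
      have h1 : ((opener f d : ℕ)) = (d : ℕ) := congrArg Fin.val (opener_of_ne (by omega))
      omega
  have hkey : opener f a = opener f b := by
    rcases lt_trichotomy ((opener f a : ℕ)) ((opener f b : ℕ)) with h | h | h
    · exfalso
      have h1 : pathHeight f (c : ℕ) ≤ pathHeight f ((opener f b : ℕ)) :=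
        height_ge_of_between hL hcdown (t := opener f b)
          (Fin.lt_def.2 (by omega)) (Fin.lt_def.2 (by omega))
      have h2 : pathHeight f (d : ℕ) ≤ pathHeight f (c : ℕ) :=
        height_ge_of_between hL hddown (t := c)
          (Fin.lt_def.2 (by omega)) (Fin.lt_def.2 (by omega))
      have h3 : pathHeight f ((opener f d : ℕ)) < pathHeight f (d : ℕ) :=
        opener_height_lt hL hddown
      rw [← hbd'] at h3
      omega
    · exact Fin.ext h
    · exfalso
      have hbdown : f b = -1 := by
        rcases hdich hL hodd b with hx | hx
        · exact hx
        · exfalso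
          have h1 : ((opener f b : ℕ)) = (b : ℕ) := congrArg Fin.val (opener_of_ne (by omega))
          omega
      have h1 : pathHeight f (b : ℕ) ≤ pathHeight f ((opener f a : ℕ)) :=
        height_ge_of_between hL hbdown (t := opener f a)
          (Fin.lt_def.2 (by omega)) (Fin.lt_def.2 (by omega))
      have h2 : pathHeight f (c : ℕ) ≤ pathHeight f (b : ℕ) :=
        height_ge_of_between hL hcdown (t := b)
          (Fin.lt_def.2 (by omega)) (Fin.lt_def.2 (by omega))
      have h3 : pathHeight f ((opener f c : ℕ)) < pathHeight f (c : ℕ) :=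
        opener_height_lt hL hcdown
      rw [← hac'] at h3
      omega
  rw [← hB₁eq, ← hB₂eq]
  apply (psi f).eq_of_mem_parts ((psi f).part_mem.2 (mem_univ a)) ((psi f).part_mem.2 (mem_univ b))
    (a := b)
  · rw [mem_part_psi]; exact hkey
  · exact (psi f).mem_part (mem_univ b)

end LukAux
namespace LukAux
open Finset

variable {n : ℕ} {π : Finpartition (Finset.univ : Finset (Fin n))}

lemma A_subset_of_lt (hnc : IsNoncrossing π) (j : Fin n) {t : ℕ}
    (h1 : ((bmin π j : ℕ)) < t) (h2 : t ≤ (j : ℕ)) : A π (j : ℕ) ⊆ A π t := by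
  intro x hx
  simp only [A, mem_filter, mem_univ, true_and] at hx ⊢
  obtain ⟨hjx, hbx⟩ := hx
  refine ⟨by omega, ?_⟩
  by_contra hcon
  push_neg at hcon
  exfalso
  have hbjx : (bmin π j : ℕ) < (bmin π x : ℕ) := by omega
  rcases eq_or_lt_of_le hjx with heq | hlt
  · have hxj : x = j := Fin.ext heq.symm
    rw [hxj] at hcon
    omega
  · have hparts := hnc (bmin π j) (bmin π x) j x
      (Fin.lt_def.2 hbjx) (Fin.lt_def.2 hbx) (Fin.lt_def.2 hlt)
      (π.part j) (π.part_mem.2 (mem_univ j)) (π.part x) (π.part_mem.2 (mem_univ x))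
      (bmin_mem j) (π.mem_part (mem_univ j)) (bmin_mem x) (π.mem_part (mem_univ x))
    have hxin : x ∈ π.part j := hparts ▸ π.mem_part (mem_univ x)
    have := congrArg Fin.val (bmin_congr hxin)
    omega

lemma bmin_lt_of_not_blockMin {j : Fin n} (hj : ¬ IsBlockMin π j) :
    (bmin π j : ℕ) < (j : ℕ) := by
  have h1 := Fin.le_def.1 (bmin_le (π := π) j)
  have h2 : (bmin π j : ℕ) ≠ (j : ℕ) := fun hh => hj (isBlockMin_iff.2 (Fin.ext hh))
  omega

lemma A_ssubset (hnc : IsNoncrossing π) {j : Fin n} (hj : ¬ IsBlockMin π j) :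
    A π ((bmin π j : ℕ)) ⊂ A π (j : ℕ) := by
  have hbj := bmin_lt_of_not_blockMin hj
  rw [Finset.ssubset_def]
  constructor
  · intro x hx
    simp only [A, mem_filter, mem_univ, true_and] at hx ⊢
    obtain ⟨hix, hbx⟩ := hx
    refine ⟨?_, by omega⟩
    by_contra hcon
    push_neg at hcon
    have hxlt : (x : ℕ) < (j : ℕ) := hcon
    have hxne : (x : ℕ) ≠ ((bmin π j : ℕ)) := by
      intro heq
      have hxeq : x = bmin π j := Fin.ext heq
      have := congrArg Fin.val (bmin_congr (π := π) (bmin_mem (π := π) j))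
      rw [hxeq] at hbx
      omega
    have hparts := hnc (bmin π x) (bmin π j) x j
      (Fin.lt_def.2 (by omega)) (Fin.lt_def.2 (by omega)) (Fin.lt_def.2 hxlt)
      (π.part x) (π.part_mem.2 (mem_univ x)) (π.part j) (π.part_mem.2 (mem_univ j))
      (bmin_mem x) (π.mem_part (mem_univ x)) (bmin_mem j) (π.mem_part (mem_univ j))
    have hxin : x ∈ π.part j := hparts ▸ π.mem_part (mem_univ x)
    have := congrArg Fin.val (bmin_congr hxin)
    omega
  · intro hsub
    have hjj : j ∈ A π (j : ℕ) := by
      simp only [A, mem_filter, mem_univ, true_and]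
      omega
    have := hsub hjj
    simp only [A, mem_filter, mem_univ, true_and] at this
    omega

lemma opener_lambda (hnc : IsNoncrossing π) (j : Fin n) :
    opener (lambdaMap π) j = bmin π j := by
  by_cases h : IsBlockMin π j
  · rw [opener_of_ne (by
      rw [lambdaMap_of_blockMin h]
      have : 0 < (π.part j).card := card_pos.2 ⟨j, π.mem_part (mem_univ j)⟩
      omega)]
    exact (isBlockMin_iff.1 h).symm
  · have hdown : lambdaMap π j = -1 := lambdaMap_of_not_blockMin h
    have hL : IsLukPath (lambdaMap π) := isLukPath_lambdaMap
    rw [opener_eq_max' hL hdown]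
    apply le_antisymm
    · apply Finset.max'_le
      intro t ht
      simp only [T, mem_filter, mem_univ, true_and] at ht
      obtain ⟨htj, hth⟩ := ht
      by_contra hcon
      push_neg at hcon
      have hsub := A_subset_of_lt hnc j (t := (t : ℕ))
        (Fin.lt_def.1 hcon) (le_of_lt (Fin.lt_def.1 htj))
      have hle := Finset.card_le_card hsub
      rw [height_eq_A (le_of_lt j.isLt), height_eq_A (le_of_lt t.isLt)] at hth
      omega
    · apply Finset.le_max'
      simp only [T, mem_filter, mem_univ, true_and]
      have hlt := Finset.card_lt_card (A_ssubset hnc h)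
      refine ⟨Fin.lt_def.2 (bmin_lt_of_not_blockMin h), ?_⟩
      rw [height_eq_A (le_of_lt j.isLt), height_eq_A (le_of_lt (bmin π j).isLt)]
      exact_mod_cast hlt

lemma finpartition_eq_of_parts {P Q : Finpartition (Finset.univ : Finset (Fin n))}
    (h : ∀ a : Fin n, P.part a = Q.part a) : P = Q := by
  have hparts : P.parts = Q.parts := by
    apply Finset.Subset.antisymm <;> intro B hB
    · obtain ⟨a, ha⟩ := P.nonempty_of_mem_parts hB
      rw [← P.part_eq_of_mem hB ha, h a]
      exact Q.part_mem.2 (mem_univ a)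
    · obtain ⟨a, ha⟩ := Q.nonempty_of_mem_parts hB
      rw [← Q.part_eq_of_mem hB ha, ← h a]
      exact P.part_mem.2 (mem_univ a)
  exact Finpartition.ext hparts

lemma psi_lambda (hnc : IsNoncrossing π) : psi (lambdaMap π) = π := by
  apply finpartition_eq_of_parts
  intro a
  ext b
  rw [mem_part_psi, opener_lambda hnc, opener_lambda hnc]
  constructor
  · intro hab
    have h1 : bmin π a ∈ π.part b := hab ▸ bmin_mem (π := π) b
    have h2 : bmin π a ∈ π.part a := bmin_mem a
    have := π.eq_of_mem_parts (π.part_mem.2 (mem_univ a)) (π.part_mem.2 (mem_univ b)) h2 h1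
    rw [this]
    exact π.mem_part (mem_univ b)
  · intro hb
    exact (bmin_congr hb).symm

end LukAux
/-- Proposition 2.2 / Corollary 2.3: `Λ(π)` is a Łukasiewicz path for any noncrossing `π`,
`Λ` restricts to a bijection `NC^even(2n') → L^odd(2n')`, and the correspondences between
steps of `Λ(π)` and elements of `[2n']` (1-based: the step of index `m : Fin (2n')`
is the `(m+1)`-st step, corresponding to the element `m+1` of `[2n']`). -/
theorem lambdaMap_bijection (n' : ℕ) (hn' : 1 ≤ n') :
    (∀ π : Finpartition (Finset.univ : Finset (Fin (2 * n'))),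
        IsNoncrossing π → IsLukPath (lambdaMap π)) ∧
    Set.BijOn lambdaMap
      {π : Finpartition (Finset.univ : Finset (Fin (2 * n'))) |
        IsNoncrossing π ∧ IsEvenPartition π}
      {f : Fin (2 * n') → ℤ | IsOddLukPath f} ∧
    (∀ π : Finpartition (Finset.univ : Finset (Fin (2 * n'))),
        IsNoncrossing π → IsEvenPartition π →
          ∀ m : Fin (2 * n'),
            ((1 ≤ lambdaMap π m ↔ IsBlockMin π m) ∧
             (lambdaMap π m = -1 → Odd (pathHeight (lambdaMap π) (m : ℕ)) →
                Even ((m : ℕ) + 1) ∧ ¬ IsBlockMin π m) ∧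
             (lambdaMap π m = -1 → Even (pathHeight (lambdaMap π) (m : ℕ)) →
                Odd ((m : ℕ) + 1) ∧ ¬ IsBlockMin π m))) := by
  have key_min : ∀ π : Finpartition (Finset.univ : Finset (Fin (2 * n'))),
      IsEvenPartition π → ∀ m, (1 ≤ lambdaMap π m ↔ IsBlockMin π m) := by
    intro π hev m
    constructor
    · intro h1
      by_contra h
      rw [LukAux.lambdaMap_of_not_blockMin h] at h1
      omega
    · intro h
      rw [LukAux.lambdaMap_of_blockMin h]
      obtain ⟨k, hk⟩ := hev _ (π.part_mem.2 (Finset.mem_univ m))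
      have hpos : 0 < (π.part m).card :=
        Finset.card_pos.2 ⟨m, π.mem_part (Finset.mem_univ m)⟩
      omega
  refine ⟨fun π _ => LukAux.isLukPath_lambdaMap, ⟨?_, ?_, ?_⟩, ?_⟩
  · -- MapsTo
    rintro π ⟨hnc, hev⟩
    refine ⟨LukAux.isLukPath_lambdaMap, fun i => ?_⟩
    by_cases h : IsBlockMin π i
    · rw [LukAux.lambdaMap_of_blockMin h]
      obtain ⟨k, hk⟩ := hev _ (π.part_mem.2 (Finset.mem_univ i))
      exact ⟨(k : ℤ) - 1, by push_cast [hk]; ring⟩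
    · rw [LukAux.lambdaMap_of_not_blockMin h]
      exact ⟨-1, by ring⟩
  · -- InjOn
    rintro π₁ ⟨h1, _⟩ π₂ ⟨h2, _⟩ heq
    rw [← LukAux.psi_lambda h1, ← LukAux.psi_lambda h2, heq]
  · -- SurjOn
    rintro f ⟨hL, hodd⟩
    exact ⟨LukAux.psi f, ⟨LukAux.psi_noncrossing hL hodd, LukAux.psi_even hL hodd⟩,
      LukAux.lambda_psi hL hodd⟩
  · -- correspondences
    intro π hnc hev m
    have hpar : Even (pathHeight (lambdaMap π) (m : ℕ) + (m : ℕ)) :=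
      LukAux.height_parity hev (le_of_lt m.isLt)
    have hnotmin : lambdaMap π m = -1 → ¬ IsBlockMin π m := by
      intro hm h
      have := (key_min π hev m).2 h
      omega
    refine ⟨key_min π hev m, fun hm hodd' => ⟨?_, hnotmin hm⟩, fun hm hev' => ⟨?_, hnotmin hm⟩⟩
    · -- H odd ⇒ m+1 even
      have hmodd : Odd ((m : ℕ) : ℤ) := by
        rcases Int.even_or_odd ((m : ℕ) : ℤ) with h | h
        · exfalso
          have : Even (pathHeight (lambdaMap π) (m : ℕ)) := by
            obtain ⟨u, hu⟩ := hpar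
            obtain ⟨v, hv⟩ := h
            exact ⟨u - v, by omega⟩
          exact (Int.not_odd_iff_even.2 this) hodd'
        · exact h
      have : Odd (m : ℕ) := by exact_mod_cast hmodd
      exact this.add_one
    · -- H even ⇒ m+1 odd
      have hmev : Even ((m : ℕ) : ℤ) := by
        obtain ⟨u, hu⟩ := hpar
        obtain ⟨v, hv⟩ := hev'
        exact ⟨u - v, by omega⟩
      have : Even (m : ℕ) := by exact_mod_cast hmev
      exact this.add_one
end

section
/- Let t, u be real numbers with t + i ≠ 0 and u + i ≠ 0 for every integer i ≥ 0, and let (κ_{2ℓ})_{ℓ≥1} and (a_{2n})_{n≥1} be real sequences satisfying the formal power series identity exp(Σ_{ℓ≥1} (κ_{2ℓ}/ℓ) z^{2ℓ}) = 1 + Σ_{n≥1} (a_{2n}/((t)_n (u)_n)) z^{2n} in ℝ[[z]]. Then for every n ≥ 1: a_{2n} = ((t)_n (u)_n / (2n)!) · Σ_{π ∈ P^even(2n)} (2^{#(π)} Π_{B∈π} (|B|−1)!) · κ_π, and κ_{2n} = (1/(2(2n−1)!)) · Σ_{π ∈ P^even(2n)} ((−1)^{#(π)−1} (#(π)−1)!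 Π_{B∈π} |B|!/((t)_{|B|/2} (u)_{|B|/2})) · a_π. -/
set_option maxHeartbeats 1000000

open Finset

open Classical in
/-- The finite set of even set partitions of `[n]`. -/
noncomputable def evenPartitions (n : ℕ) :
    Finset (Finpartition (Finset.univ : Finset (Fin n))) :=
  Finset.univ.filter IsEvenPartition

/-- Pochhammer symbol `(v)_n = v (v+1) ⋯ (v+n-1)`. -/
noncomputable def pochEval (v : ℝ) (n : ℕ) : ℝ := (ascPochhammer ℝ n).eval v

/-- Formal exponential of a power series with zero constant term. -/
noncomputable def fexp (F : PowerSeries ℝ) : PowerSeries ℝ :=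
  PowerSeries.mk fun n =>
    ∑ k ∈ Finset.range (n + 1), (PowerSeries.coeff n (F ^ k)) / (k.factorial : ℝ)

/-- The series `Σ_{ℓ≥1} (x_ℓ/ℓ) z^{2ℓ}` associated to a sequence `(x_{2ℓ})_{ℓ≥1}`
(where `x ℓ` stands for `x_{2ℓ}`). -/
noncomputable def evenSeries (x : ℕ → ℝ) : PowerSeries ℝ :=
  PowerSeries.mk fun j => if j ≠ 0 ∧ j % 2 = 0 then x (j / 2) / ((j / 2 : ℕ) : ℝ) else 0

/-- The series `1 + Σ_{n≥1} (a_{2n}/((t)_n (u)_n)) z^{2n}` (where `a n` stands for `a_{2n}`). -/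
noncomputable def coeffSeriesTU (t u : ℝ) (a : ℕ → ℝ) : PowerSeries ℝ :=
  PowerSeries.mk fun j =>
    if j = 0 then 1
    else if j % 2 = 0 then a (j / 2) / (pochEval t (j / 2) * pochEval u (j / 2)) else 0


section Aux
open Finset PowerSeries

lemma avoid_parts_of_mem {α : Type} [DecidableEq α] {s : Finset α} (π : Finpartition s)
    {B : Finset α} (hB : B ∈ π.parts) : (π.avoid B).parts = π.parts.erase B := by
  ext C
  rw [Finpartition.mem_avoid, Finset.mem_erase]
  constructor
  · rintro ⟨D, hD, hDB, rfl⟩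
    have hne : D ≠ B := by rintro rfl; exact hDB le_rfl
    have hd : Disjoint D B := π.disjoint hD hB hne
    rw [Finset.sdiff_eq_self_of_disjoint hd]
    exact ⟨hne, hD⟩
  · rintro ⟨hne, hC⟩
    have hd : Disjoint C B := π.disjoint hC hB hne
    refine ⟨C, hC, ?_, Finset.sdiff_eq_self_of_disjoint hd⟩
    intro hle
    have h2 : C = (⊥ : Finset α) := (π.disjoint hC hB hne).eq_bot_of_le hle
    exact π.bot_notMem (h2 ▸ hC)

lemma partition_sum_eq (c : ℕ → ℝ) (hc : c 0 = 0) :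
    ∀ (k : ℕ) {α : Type} [DecidableEq α] (s : Finset α),
      (k.factorial : ℝ) *
        ∑ π ∈ (Finset.univ : Finset (Finpartition s)).filter (fun π => π.parts.card = k),
          ∏ B ∈ π.parts, ((B.card.factorial : ℝ) * c B.card)
      = (s.card.factorial : ℝ) *
          PowerSeries.coeff s.card ((PowerSeries.mk c) ^ k) := by
  intro k
  induction k with
  | zero =>
    intro α _ s
    rcases eq_or_ne s ∅ with rfl | hs
    · have hparts : ∀ π : Finpartition (∅ : Finset α), π.parts = ∅ := by
        intro π
        by_contra hne
        obtain ⟨B, hB⟩ := Finset.nonempty_iff_ne_empty.2 hne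
        have h1 : B ⊆ ∅ := π.le hB
        have h2 := π.nonempty_of_mem_parts hB
        simp [Finset.subset_empty.1 h1] at h2
      have hfil : (Finset.univ : Finset (Finpartition (∅ : Finset α))).filter
          (fun π => π.parts.card = 0) = Finset.univ := by
        refine Finset.filter_true_of_mem fun π _ => ?_
        rw [hparts π, Finset.card_empty]
      have huniv : (Finset.univ : Finset (Finpartition (∅ : Finset α))).card = 1 := by
        rw [Finset.card_eq_one]
        refine ⟨Finpartition.empty _, ?_⟩
        ext π
        simp only [Finset.mem_univ, Finset.mem_singleton, true_iff]
        ext B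
        rw [hparts π]
        rfl
      rw [hfil]
      simp only [pow_zero]
      rw [Finset.sum_congr rfl (fun π _ => by rw [hparts π, Finset.prod_empty])]
      simp [huniv]
    · have hfil : (Finset.univ : Finset (Finpartition s)).filter
          (fun π => π.parts.card = 0) = ∅ := by
        refine Finset.filter_false_of_mem fun π _ h0 => ?_
        have : π.parts = ∅ := Finset.card_eq_zero.1 h0
        have h2 := π.sup_parts
        rw [this] at h2
        simp only [Finset.sup_empty] at h2
        exact hs (by rw [← h2]; rfl)
      rw [hfil]
      have : s.card ≠ 0 := by
        simpa [Finset.card_eq_zero] using hs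
      simp [PowerSeries.coeff_one, this]
  | succ k ih =>
    intro α _ s
    classical
    set w : ℕ → ℝ := fun m => (m.factorial : ℝ) * c m with hw
    have hw0 : w 0 = 0 := by simp [hw, hc]
    set n := s.card with hn
    -- Step 1
    have step1 :
        ((k+1 : ℕ) : ℝ) *
          ∑ π ∈ (Finset.univ : Finset (Finpartition s)).filter (fun π => π.parts.card = k+1),
            ∏ B ∈ π.parts, w B.card
        = ∑ B ∈ s.powerset.filter Finset.Nonempty,
            w B.card *
              ∑ σ ∈ (Finset.univ : Finset (Finpartition (s \ B))).filter
                  (fun σ => σ.parts.card = k), ∏ B' ∈ σ.parts, w B'.card := by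
      rw [Finset.mul_sum]
      have lhs : ∀ π ∈ (Finset.univ : Finset (Finpartition s)).filter
          (fun π => π.parts.card = k+1),
          ((k+1 : ℕ) : ℝ) * ∏ B ∈ π.parts, w B.card
          = ∑ B ∈ π.parts, (w B.card * ∏ B' ∈ π.parts.erase B, w B'.card) := by
        intro π hπ
        rw [Finset.mem_filter] at hπ
        have h1 : ∑ B ∈ π.parts, (w B.card * ∏ B' ∈ π.parts.erase B, w B'.card)
            = ∑ _B ∈ π.parts, ∏ B' ∈ π.parts, w B'.card :=
          Finset.sum_congr rfl fun B hB =>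
            Finset.mul_prod_erase π.parts (fun C => w C.card) hB
        rw [h1, Finset.sum_const, hπ.2, nsmul_eq_mul]
      rw [Finset.sum_congr rfl lhs]
      have rhs : ∀ B ∈ s.powerset.filter Finset.Nonempty,
          w B.card * ∑ σ ∈ (Finset.univ : Finset (Finpartition (s \ B))).filter
              (fun σ => σ.parts.card = k), ∏ B' ∈ σ.parts, w B'.card
          = ∑ σ ∈ (Finset.univ : Finset (Finpartition (s \ B))).filter
              (fun σ => σ.parts.card = k), (w B.card * ∏ B' ∈ σ.parts, w B'.card) := by
        intro B _
        rw [Finset.mul_sum]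
      rw [Finset.sum_congr rfl rhs]
      rw [Finset.sum_sigma', Finset.sum_sigma']
      refine Finset.sum_bij'
        (fun p _ => (⟨p.2, p.1.avoid p.2⟩ : Σ B : Finset α, Finpartition (s \ B)))
        (fun q hq =>
          have hq' : q.1 ⊆ s ∧ q.1.Nonempty := by
            rw [Finset.mem_sigma, Finset.mem_filter, Finset.mem_powerset] at hq
            exact hq.1
          (⟨q.2.extend
              (by simpa [Finset.bot_eq_empty, ← Finset.nonempty_iff_ne_empty] using hq'.2)
              Finset.sdiff_disjoint
              (by rw [sup_eq_union, Finset.sdiff_union_of_subset hq'.1]),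
            q.1⟩ : Σ _π : Finpartition s, Finset α))
        ?_ ?_ ?_ ?_ ?_
      · -- hi
        rintro ⟨π, B⟩ hp
        rw [Finset.mem_sigma, Finset.mem_filter] at hp
        obtain ⟨⟨-, hcard⟩, hB⟩ := hp
        rw [Finset.mem_sigma, Finset.mem_filter, Finset.mem_filter, Finset.mem_powerset]
        refine ⟨⟨π.le hB, π.nonempty_of_mem_parts hB⟩, Finset.mem_univ _, ?_⟩
        rw [avoid_parts_of_mem π hB, Finset.card_erase_of_mem hB, hcard]
        omega
      · -- hj
        rintro ⟨B, σ⟩ hq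
        dsimp only
        rw [Finset.mem_sigma, Finset.mem_filter]
        have hq' := hq
        rw [Finset.mem_sigma, Finset.mem_filter, Finset.mem_filter, Finset.mem_powerset] at hq'
        refine ⟨⟨Finset.mem_univ _, ?_⟩, ?_⟩
        · rw [Finpartition.card_extend, hq'.2.2]
        · rw [Finpartition.extend_parts]
          exact Finset.mem_insert_self _ _
      · -- left_inv
        rintro ⟨π, B⟩ hp
        have hp' := hp
        rw [Finset.mem_sigma, Finset.mem_filter] at hp'
        obtain ⟨⟨-, hcard⟩, hB⟩ := hp'
        dsimp only
        refine Sigma.ext ?_ (heq_of_eq rfl)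
        apply Finpartition.ext
        rw [Finpartition.extend_parts, avoid_parts_of_mem π hB, Finset.insert_erase hB]
      · -- right_inv
        rintro ⟨B, σ⟩ hq
        have hq' := hq
        rw [Finset.mem_sigma, Finset.mem_filter, Finset.mem_filter, Finset.mem_powerset] at hq'
        have hBnot : B ∉ σ.parts := by
          intro hmem
          have h1 : B ⊆ s \ B := σ.le hmem
          obtain ⟨x, hx⟩ := hq'.1.2
          exact (Finset.mem_sdiff.1 (h1 hx)).2 hx
        dsimp only
        refine Sigma.ext rfl (heq_of_eq ?_)
        apply Finpartition.ext
        have hmem : B ∈ (σ.extend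
            (by simpa [Finset.bot_eq_empty, ← Finset.nonempty_iff_ne_empty] using hq'.1.2)
            Finset.sdiff_disjoint
            (by rw [sup_eq_union, Finset.sdiff_union_of_subset hq'.1.1])).parts := by
          rw [Finpartition.extend_parts]; exact Finset.mem_insert_self _ _
        rw [avoid_parts_of_mem _ hmem, Finpartition.extend_parts, Finset.erase_insert hBnot]
      · -- values
        rintro ⟨π, B⟩ hp
        have hp' := hp
        rw [Finset.mem_sigma, Finset.mem_filter] at hp'
        obtain ⟨⟨-, hcard⟩, hB⟩ := hp'
        dsimp only
        rw [avoid_parts_of_mem π hB]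
    -- Step 2: assemble
    calc ((k+1).factorial : ℝ) *
          ∑ π ∈ (Finset.univ : Finset (Finpartition s)).filter (fun π => π.parts.card = k+1),
            ∏ B ∈ π.parts, w B.card
        = (k.factorial : ℝ) * (((k+1 : ℕ) : ℝ) *
          ∑ π ∈ (Finset.univ : Finset (Finpartition s)).filter (fun π => π.parts.card = k+1),
            ∏ B ∈ π.parts, w B.card) := by
          rw [Nat.factorial_succ]; push_cast; ring
      _ = (k.factorial : ℝ) * ∑ B ∈ s.powerset.filter Finset.Nonempty,
            w B.card * ∑ σ ∈ (Finset.univ : Finset (Finpartition (s \ B))).filter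
              (fun σ => σ.parts.card = k), ∏ B' ∈ σ.parts, w B'.card := by rw [step1]
      _ = ∑ B ∈ s.powerset.filter Finset.Nonempty,
            w B.card * ((k.factorial : ℝ) *
              ∑ σ ∈ (Finset.univ : Finset (Finpartition (s \ B))).filter
                (fun σ => σ.parts.card = k), ∏ B' ∈ σ.parts, w B'.card) := by
          rw [Finset.mul_sum]; exact Finset.sum_congr rfl fun B _ => by ring
      _ = ∑ B ∈ s.powerset.filter Finset.Nonempty,
            w B.card * (((s \ B).card.factorial : ℝ) *
              PowerSeries.coeff (s \ B).card ((PowerSeries.mk c) ^ k)) :=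
          Finset.sum_congr rfl fun B _ => by rw [ih]
      _ = ∑ B ∈ s.powerset,
            w B.card * (((s \ B).card.factorial : ℝ) *
              PowerSeries.coeff (s \ B).card ((PowerSeries.mk c) ^ k)) := by
          refine Finset.sum_filter_of_ne fun B _ hne => ?_
          by_contra hB
          rw [Finset.not_nonempty_iff_eq_empty] at hB
          subst hB
          simp [hw0] at hne
      _ = ∑ B ∈ s.powerset,
            (fun m => w m * (((n - m).factorial : ℝ) *
              PowerSeries.coeff (n - m) ((PowerSeries.mk c) ^ k))) B.card := by
          refine Finset.sum_congr rfl fun B hB => ?_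
          rw [Finset.card_sdiff_of_subset (Finset.mem_powerset.1 hB)]
      _ = ∑ m ∈ Finset.range (n+1), (n.choose m) •
            (fun m => w m * (((n - m).factorial : ℝ) *
              PowerSeries.coeff (n - m) ((PowerSeries.mk c) ^ k))) m :=
          by rw [hn]
             exact Finset.sum_powerset_apply_card
               (fun m => w m * (((#s - m).factorial : ℝ) *
                 PowerSeries.coeff (#s - m) ((PowerSeries.mk c) ^ k)))
      _ = ∑ m ∈ Finset.range (n+1), (n.factorial : ℝ) *
            (c m * PowerSeries.coeff (n - m) ((PowerSeries.mk c) ^ k)) := by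
          refine Finset.sum_congr rfl fun m hm => ?_
          have hmn : m ≤ n := Nat.lt_succ_iff.1 (Finset.mem_range.1 hm)
          have hcf : (n.choose m * m.factorial * (n - m).factorial : ℕ) = n.factorial :=
            Nat.choose_mul_factorial_mul_factorial hmn
          have hcf' : ((n.choose m : ℝ)) * (m.factorial : ℝ) * ((n - m).factorial : ℝ)
              = (n.factorial : ℝ) := by exact_mod_cast congrArg (Nat.cast (R := ℝ)) hcf
          rw [nsmul_eq_mul]
          simp only [hw]
          linear_combination (c m * PowerSeries.coeff (n - m) ((PowerSeries.mk c) ^ k)) * hcf'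
      _ = (n.factorial : ℝ) * ∑ m ∈ Finset.range (n+1),
            c m * PowerSeries.coeff (n - m) ((PowerSeries.mk c) ^ k) := by
          rw [Finset.mul_sum]
      _ = (n.factorial : ℝ) * PowerSeries.coeff n ((PowerSeries.mk c) ^ (k+1)) := by
          rw [pow_succ', PowerSeries.coeff_mul,
            Finset.Nat.sum_antidiagonal_eq_sum_range_succ_mk]
          simp only [PowerSeries.coeff_mk]


lemma coeff_pow_eq_zero' {F : PowerSeries ℝ} (hF : PowerSeries.constantCoeff F = 0)
    {n k : ℕ} (h : n < k) : PowerSeries.coeff n (F ^ k) = 0 := by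
  obtain ⟨G, rfl⟩ : (X : PowerSeries ℝ) ∣ F := X_dvd_iff.2 hF
  rw [mul_pow, PowerSeries.coeff_mul]
  refine Finset.sum_eq_zero fun p hp => ?_
  rw [Finset.HasAntidiagonal.mem_antidiagonal] at hp
  rw [coeff_X_pow, if_neg, zero_mul]
  omega

lemma constantCoeff_fexp (F : PowerSeries ℝ) : PowerSeries.constantCoeff (fexp F) = 1 := by
  rw [← PowerSeries.coeff_zero_eq_constantCoeff_apply]
  simp [fexp]

noncomputable def flog (G : PowerSeries ℝ) : PowerSeries ℝ :=
  PowerSeries.mk fun m =>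
    ∑ k ∈ Finset.range m, (-1)^k / ((k : ℝ)+1) * PowerSeries.coeff m ((G - 1)^(k+1))

lemma fexp_deriv (F : PowerSeries ℝ) (hF : PowerSeries.constantCoeff F = 0) :
    PowerSeries.derivative ℝ (fexp F) = fexp F * PowerSeries.derivative ℝ F := by
  ext n
  rw [PowerSeries.coeff_derivative]
  have hfc : PowerSeries.coeff (n+1) (fexp F)
      = ∑ k ∈ Finset.range (n+2), (PowerSeries.coeff (n+1) (F ^ k)) / (k.factorial : ℝ) := by
    simp [fexp]
  rw [hfc, Finset.sum_range_succ']
  have h0 : PowerSeries.coeff (n+1) (F ^ 0) / ((0:ℕ).factorial : ℝ) = 0 := by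
    simp [PowerSeries.coeff_one]
  rw [h0, add_zero, Finset.sum_mul]
  have hterm : ∀ k, PowerSeries.coeff (n+1) (F ^ (k+1)) / ((k+1).factorial : ℝ) * ((n:ℝ)+1)
      = PowerSeries.coeff n (F ^ k * PowerSeries.derivative ℝ F) / (k.factorial : ℝ) := by
    intro k
    have h2 : PowerSeries.derivative ℝ (F ^ (k+1))
        = (k+1) • (F ^ k * PowerSeries.derivative ℝ F) := by
      have := Derivation.leibniz_pow (PowerSeries.derivative (R := ℝ)) (a := F) (k+1)
      rw [Nat.add_sub_cancel] at this
      rw [this, smul_eq_mul]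
    have h3 : PowerSeries.coeff n (PowerSeries.derivative ℝ (F ^ (k+1)))
        = PowerSeries.coeff (n+1) (F ^ (k+1)) * ((n:ℝ)+1) := by
      rw [PowerSeries.coeff_derivative]
    rw [h2] at h3
    rw [map_nsmul] at h3
    have hkf : ((k+1).factorial : ℝ) = ((k:ℝ)+1) * (k.factorial : ℝ) := by
      rw [Nat.factorial_succ]; push_cast; ring
    have hk1 : ((k:ℝ)+1) ≠ 0 := by positivity
    have hkf0 : (k.factorial : ℝ) ≠ 0 := Nat.cast_ne_zero.2 k.factorial_ne_zero
    rw [nsmul_eq_mul] at h3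
    push_cast at h3
    field_simp [hkf]
    linear_combination ((k.factorial : ℝ)) * h3.symm - (PowerSeries.coeff n (F ^ k * PowerSeries.derivative ℝ F)) * hkf
  rw [Finset.sum_congr rfl fun k _ => hterm k]
  -- now RHS
  rw [PowerSeries.coeff_mul]
  have hR : ∀ p ∈ Finset.HasAntidiagonal.antidiagonal n,
      PowerSeries.coeff p.1 (fexp F) * PowerSeries.coeff p.2 (PowerSeries.derivative ℝ F)
      = ∑ k ∈ Finset.range (n+1),
          (PowerSeries.coeff p.1 (F ^ k) / (k.factorial : ℝ)) *
            PowerSeries.coeff p.2 (PowerSeries.derivative ℝ F) := by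
    intro p hp
    rw [Finset.HasAntidiagonal.mem_antidiagonal] at hp
    have hp1 : p.1 + 1 ≤ n + 1 := by omega
    have hfc1 : PowerSeries.coeff p.1 (fexp F)
        = ∑ k ∈ Finset.range (p.1+1), (PowerSeries.coeff p.1 (F ^ k)) / (k.factorial : ℝ) := by
      simp [fexp]
    rw [hfc1, ← Finset.sum_mul]
    congr 1
    refine Finset.sum_subset (Finset.range_subset_range.2 hp1) fun k _ hk => ?_
    rw [Finset.mem_range, not_lt] at hk
    have : p.1 < k := by rw [Finset.mem_range] at *; omega
    rw [coeff_pow_eq_zero' hF this, zero_div]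
  rw [Finset.sum_congr rfl hR, Finset.sum_comm]
  refine Finset.sum_congr rfl fun k _ => ?_
  rw [PowerSeries.coeff_mul, Finset.sum_div]
  refine Finset.sum_congr rfl fun p _ => ?_
  ring

lemma flog_deriv (G : PowerSeries ℝ) (hG : PowerSeries.constantCoeff G = 1) :
    G * PowerSeries.derivative ℝ (flog G) = PowerSeries.derivative ℝ G := by
  set H := G - 1 with hH
  have hH0 : PowerSeries.constantCoeff H = 0 := by simp [hH, hG]
  have hDG : PowerSeries.derivative ℝ G = PowerSeries.derivative ℝ H := by
    rw [hH, map_sub, Derivation.map_one_eq_zero]; simp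
  ext n
  set Q : PowerSeries ℝ := ∑ k ∈ Finset.range (n+1), (-H)^k with hQ
  have claim1 : ∀ j, j ≤ n → PowerSeries.coeff j (PowerSeries.derivative ℝ (flog G))
      = PowerSeries.coeff j (Q * PowerSeries.derivative ℝ H) := by
    intro j hj
    have hfl : PowerSeries.coeff (j+1) (flog G)
        = ∑ k ∈ Finset.range (j+1),
            (-1:ℝ)^k / ((k:ℝ)+1) * PowerSeries.coeff (j+1) (H^(k+1)) := by
      simp [flog, hH]
    rw [PowerSeries.coeff_derivative, hfl, Finset.sum_mul]
    have hterm : ∀ k : ℕ, ((-1:ℝ)^k / ((k:ℝ)+1) * PowerSeries.coeff (j+1) (H^(k+1))) * ((j:ℝ)+1)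
        = (-1:ℝ)^k * PowerSeries.coeff j (H^k * PowerSeries.derivative ℝ H) := by
      intro k
      have h2 : PowerSeries.derivative ℝ (H ^ (k+1))
          = (k+1) • (H ^ k * PowerSeries.derivative ℝ H) := by
        have := Derivation.leibniz_pow (PowerSeries.derivative (R := ℝ)) (a := H) (k+1)
        rw [Nat.add_sub_cancel] at this
        rw [this, smul_eq_mul]
      have h3 : PowerSeries.coeff j (PowerSeries.derivative ℝ (H^(k+1)))
          = PowerSeries.coeff (j+1) (H^(k+1)) * ((j:ℝ)+1) := PowerSeries.coeff_derivative _ _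
      rw [h2, map_nsmul, nsmul_eq_mul] at h3
      push_cast at h3
      have hk1 : ((k:ℝ)+1) ≠ 0 := by positivity
      field_simp
      linear_combination h3.symm
    rw [Finset.sum_congr rfl fun k _ => hterm k]
    have hco : ∀ k : ℕ, PowerSeries.coeff j ((-H)^k * PowerSeries.derivative ℝ H)
        = (-1:ℝ)^k * PowerSeries.coeff j (H^k * PowerSeries.derivative ℝ H) := by
      intro k
      have hnp : (-H)^k = PowerSeries.C ((-1:ℝ)^k) * H^k := by
        rw [neg_pow]
        congr 1
        rw [map_pow, map_neg, map_one]
      rw [hnp, mul_assoc, PowerSeries.coeff_C_mul]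
    rw [hQ, Finset.sum_mul, map_sum, Finset.sum_congr rfl fun k _ => hco k]
    refine Finset.sum_subset (Finset.range_subset_range.2 (by omega)) fun k _ hk => ?_
    rw [Finset.mem_range, not_lt] at hk
    have h0 : PowerSeries.coeff j (H^k * PowerSeries.derivative ℝ H) = 0 := by
      rw [PowerSeries.coeff_mul]
      refine Finset.sum_eq_zero fun p hp => ?_
      rw [Finset.HasAntidiagonal.mem_antidiagonal] at hp
      rw [coeff_pow_eq_zero' hH0 (by omega), zero_mul]
    rw [h0, mul_zero]
  have main : PowerSeries.coeff n (G * PowerSeries.derivative ℝ (flog G))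
      = PowerSeries.coeff n (G * (Q * PowerSeries.derivative ℝ H)) := by
    rw [PowerSeries.coeff_mul, PowerSeries.coeff_mul]
    refine Finset.sum_congr rfl fun p hp => ?_
    rw [Finset.HasAntidiagonal.mem_antidiagonal] at hp
    rw [claim1 p.2 (by omega)]
  rw [main, hDG]
  have hgeom := geom_sum_mul (-H) (n+1)
  have hG1 : G = 1 + H := by rw [hH]; ring
  have htel : G * (Q * PowerSeries.derivative ℝ H)
      = PowerSeries.derivative ℝ H - (-H)^(n+1) * PowerSeries.derivative ℝ H := by
    calc G * (Q * PowerSeries.derivative ℝ H)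
        = (Q * (-H - 1)) * (-(PowerSeries.derivative ℝ H)) := by rw [hG1]; ring
      _ = ((-H)^(n+1) - 1) * (-(PowerSeries.derivative ℝ H)) := by rw [hQ, hgeom]
      _ = PowerSeries.derivative ℝ H - (-H)^(n+1) * PowerSeries.derivative ℝ H := by ring
  rw [htel, map_sub]
  have hzero : PowerSeries.coeff n ((-H)^(n+1) * PowerSeries.derivative ℝ H) = 0 := by
    rw [PowerSeries.coeff_mul]
    refine Finset.sum_eq_zero fun p hp => ?_
    rw [Finset.HasAntidiagonal.mem_antidiagonal] at hp
    have hcH : PowerSeries.constantCoeff (-H) = 0 := by rw [map_neg, hH0, neg_zero]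
    rw [coeff_pow_eq_zero' hcH (by omega), zero_mul]
  rw [hzero, sub_zero]

lemma flog_fexp (F : PowerSeries ℝ) (hF : PowerSeries.constantCoeff F = 0) :
    flog (fexp F) = F := by
  have h1 : PowerSeries.constantCoeff (fexp F) = 1 := constantCoeff_fexp F
  have h2 := flog_deriv (fexp F) h1
  rw [fexp_deriv F hF] at h2
  have hne : (fexp F) ≠ 0 := fun hh => by simp [hh] at h1
  have h3 : PowerSeries.derivative ℝ (flog (fexp F)) = PowerSeries.derivative ℝ F :=
    mul_left_cancel₀ hne h2
  refine PowerSeries.derivative.ext h3 ?_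
  rw [hF, ← PowerSeries.coeff_zero_eq_constantCoeff_apply]
  simp [flog]

lemma card_parts_le_n {n : ℕ} (π : Finpartition (Finset.univ : Finset (Fin n))) :
    π.parts.card ≤ n := by
  have := π.card_parts_le_card
  simpa using this

lemma coeff_fexp_eq (c : ℕ → ℝ) (hc : c 0 = 0) (n : ℕ) :
    (n.factorial : ℝ) * PowerSeries.coeff n (fexp (PowerSeries.mk c)) =
      ∑ π ∈ (Finset.univ : Finset (Finpartition (Finset.univ : Finset (Fin n)))),
        ∏ B ∈ π.parts, ((B.card.factorial : ℝ) * c B.card) := by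
  classical
  have hcard : (Finset.univ : Finset (Fin n)).card = n := by simp
  have hfib := Finset.sum_fiberwise_of_maps_to (g := fun π : Finpartition (Finset.univ : Finset (Fin n)) => π.parts.card)
      (s := (Finset.univ : Finset (Finpartition (Finset.univ : Finset (Fin n)))))
      (t := Finset.range (n+1))
      (fun π _ => Finset.mem_range.2 (Nat.lt_succ_of_le (card_parts_le_n π)))
      (fun π => ∏ B ∈ π.parts, ((B.card.factorial : ℝ) * c B.card))
  rw [← hfib]
  have hfexp : PowerSeries.coeff n (fexp (PowerSeries.mk c))
      = ∑ k ∈ Finset.range (n+1),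
          PowerSeries.coeff n ((PowerSeries.mk c) ^ k) / (k.factorial : ℝ) := by
    simp [fexp]
  rw [hfexp, Finset.mul_sum]
  refine Finset.sum_congr rfl fun k _ => ?_
  have key := partition_sum_eq c hc k (Finset.univ : Finset (Fin n))
  rw [hcard] at key
  have hk0 : (k.factorial : ℝ) ≠ 0 := Nat.cast_ne_zero.2 k.factorial_ne_zero
  field_simp
  linear_combination key.symm

lemma coeff_flog_eq (G : PowerSeries ℝ) (hG : PowerSeries.constantCoeff G = 1)
    (n : ℕ) (hn : 1 ≤ n) :
    (n.factorial : ℝ) * PowerSeries.coeff n (flog G) =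
      ∑ π ∈ (Finset.univ : Finset (Finpartition (Finset.univ : Finset (Fin n)))),
        ((-1:ℝ)^(π.parts.card - 1) * ((π.parts.card - 1).factorial : ℝ)) *
          ∏ B ∈ π.parts, ((B.card.factorial : ℝ) * PowerSeries.coeff B.card (G - 1)) := by
  classical
  set c : ℕ → ℝ := fun m => PowerSeries.coeff m (G - 1) with hcdef
  have hc : c 0 = 0 := by
    simp [hcdef, PowerSeries.coeff_zero_eq_constantCoeff, hG]
  have hmk : G - 1 = PowerSeries.mk c := by
    ext m; simp [hcdef]
  have hcard : (Finset.univ : Finset (Fin n)).card = n := by simp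
  -- RHS fiberwise
  have hfib := Finset.sum_fiberwise_of_maps_to (g := fun π : Finpartition (Finset.univ : Finset (Fin n)) => π.parts.card)
      (s := (Finset.univ : Finset (Finpartition (Finset.univ : Finset (Fin n)))))
      (t := Finset.range (n+1))
      (fun π _ => Finset.mem_range.2 (Nat.lt_succ_of_le (card_parts_le_n π)))
      (fun π => ((-1:ℝ)^(π.parts.card - 1) * ((π.parts.card - 1).factorial : ℝ)) *
          ∏ B ∈ π.parts, ((B.card.factorial : ℝ) * c B.card))
  rw [← hfib, Finset.sum_range_succ']
  have h0 : ∑ π ∈ (Finset.univ : Finset (Finpartition (Finset.univ : Finset (Fin n)))).filter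
      (fun π => π.parts.card = 0),
        ((-1:ℝ)^(π.parts.card - 1) * ((π.parts.card - 1).factorial : ℝ)) *
          ∏ B ∈ π.parts, ((B.card.factorial : ℝ) * c B.card) = 0 := by
    refine Finset.sum_eq_zero fun π hπ => ?_
    rw [Finset.mem_filter] at hπ
    exfalso
    have hp : π.parts = ∅ := Finset.card_eq_zero.1 hπ.2
    have h2 := π.sup_parts
    rw [hp] at h2
    simp only [Finset.sup_empty] at h2
    have : (Finset.univ : Finset (Fin n)).card = 0 := by rw [← h2]; rfl
    rw [hcard] at this
    omega
  rw [h0, add_zero]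
  -- LHS
  have hfl : PowerSeries.coeff n (flog G)
      = ∑ k ∈ Finset.range n,
          (-1:ℝ)^k / ((k:ℝ)+1) * PowerSeries.coeff n ((G - 1)^(k+1)) := by
    simp [flog]
  rw [hfl, Finset.mul_sum]
  refine Finset.sum_congr rfl fun k _ => ?_
  have key := partition_sum_eq c hc (k+1) (Finset.univ : Finset (Fin n))
  rw [hcard] at key
  have hsign : ∀ π ∈ (Finset.univ : Finset (Finpartition (Finset.univ : Finset (Fin n)))).filter
      (fun π => π.parts.card = k + 1),
      ((-1:ℝ)^(π.parts.card - 1) * ((π.parts.card - 1).factorial : ℝ)) *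
          ∏ B ∈ π.parts, ((B.card.factorial : ℝ) * c B.card)
      = ((-1:ℝ)^k * (k.factorial : ℝ)) *
          ∏ B ∈ π.parts, ((B.card.factorial : ℝ) * c B.card) := by
    intro π hπ
    rw [Finset.mem_filter] at hπ
    rw [hπ.2]
    norm_num
  rw [Finset.sum_congr rfl hsign, ← Finset.mul_sum, hmk]
  have hk1 : ((k:ℝ)+1) ≠ 0 := by positivity
  have hkf : ((k+1).factorial : ℝ) = ((k:ℝ)+1) * (k.factorial : ℝ) := by
    rw [Nat.factorial_succ]; push_cast; ring
  rw [hkf] at key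
  field_simp
  linear_combination key.symm

lemma pochEval_ne_zero {v : ℝ} (hv : ∀ i : ℕ, v + i ≠ 0) (n : ℕ) : pochEval v n ≠ 0 := by
  induction n with
  | zero => simp [pochEval]
  | succ m ih =>
    rw [pochEval, ascPochhammer_succ_eval]
    exact mul_ne_zero ih (hv m)

end Aux

/-- Lemma 3.2: coefficients in terms of cumulants and vice versa, via even set partitions. -/
theorem cumulant_coefficient_formulas (t u : ℝ)
    (ht : ∀ i : ℕ, t + i ≠ 0) (hu : ∀ i : ℕ, u + i ≠ 0)
    (κ a : ℕ → ℝ)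
    (h : fexp (evenSeries κ) = coeffSeriesTU t u a) :
    ∀ n : ℕ, 1 ≤ n →
      (a n = pochEval t n * pochEval u n / ((2 * n).factorial : ℝ) *
        ∑ π ∈ evenPartitions (2 * n),
          ((2 : ℝ) ^ π.parts.card * ∏ B ∈ π.parts, ((B.card - 1).factorial : ℝ)) *
            ∏ B ∈ π.parts, κ (B.card / 2)) ∧
      (κ n = 1 / (2 * ((2 * n - 1).factorial : ℝ)) *
        ∑ π ∈ evenPartitions (2 * n),
          ((-1 : ℝ) ^ (π.parts.card - 1) * ((π.parts.card - 1).factorial : ℝ) *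
            ∏ B ∈ π.parts,
              (B.card.factorial : ℝ) / (pochEval t (B.card / 2) * pochEval u (B.card / 2))) *
            ∏ B ∈ π.parts, a (B.card / 2)) := by
  intro n hn
  classical
  set N := 2 * n with hN
  have hN1 : 1 ≤ N := by omega
  have hNmod : N % 2 = 0 := by omega
  have hNdiv : N / 2 = n := by omega
  set cκ : ℕ → ℝ :=
    fun j => if j ≠ 0 ∧ j % 2 = 0 then κ (j / 2) / ((j / 2 : ℕ) : ℝ) else 0 with hcκ
  have hevmk : evenSeries κ = PowerSeries.mk cκ := rfl
  have hcκ0 : cκ 0 = 0 := by simp [hcκ]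
  have hces : PowerSeries.constantCoeff (evenSeries κ) = 0 := by
    rw [hevmk, ← PowerSeries.coeff_zero_eq_constantCoeff_apply, PowerSeries.coeff_mk, hcκ0]
  have hPt : pochEval t n ≠ 0 := pochEval_ne_zero ht n
  have hPu : pochEval u n ≠ 0 := pochEval_ne_zero hu n
  have hfacN : ((N.factorial : ℕ) : ℝ) ≠ 0 := Nat.cast_ne_zero.2 N.factorial_ne_zero
  have hGC : PowerSeries.coeff N (coeffSeriesTU t u a)
      = a n / (pochEval t n * pochEval u n) := by
    rw [coeffSeriesTU, PowerSeries.coeff_mk, if_neg (by omega), if_pos hNmod, hNdiv]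
  constructor
  · -- coefficient formula
    have hmain := coeff_fexp_eq cκ hcκ0 N
    rw [← hevmk, h, hGC] at hmain
    have hres : ∑ π ∈ (Finset.univ : Finset (Finpartition (Finset.univ : Finset (Fin N)))),
          ∏ B ∈ π.parts, ((B.card.factorial : ℝ) * cκ B.card)
        = ∑ π ∈ evenPartitions N,
          ∏ B ∈ π.parts, ((B.card.factorial : ℝ) * cκ B.card) := by
      symm
      refine Finset.sum_subset (fun π _ => Finset.mem_univ _) ?_
      intro π _ hπ
      have hnev : ¬ IsEvenPartition π := by
        intro hev
        exact hπ (by rw [evenPartitions, Finset.mem_filter]; exact ⟨Finset.mem_univ _, hev⟩)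
      obtain ⟨B, hB, hodd⟩ : ∃ B ∈ π.parts, ¬ Even B.card := by
        by_contra hh
        push_neg at hh
        exact hnev hh
      refine Finset.prod_eq_zero hB ?_
      have hz : cκ B.card = 0 := by
        rw [hcκ]
        refine if_neg ?_
        rw [Nat.even_iff] at hodd
        tauto
      rw [hz, mul_zero]
    rw [hres] at hmain
    have hweight : ∀ π ∈ evenPartitions N,
        ∏ B ∈ π.parts, ((B.card.factorial : ℝ) * cκ B.card)
        = ((2 : ℝ) ^ π.parts.card * ∏ B ∈ π.parts, ((B.card - 1).factorial : ℝ)) *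
            ∏ B ∈ π.parts, κ (B.card / 2) := by
      intro π hπ
      rw [evenPartitions, Finset.mem_filter] at hπ
      have hblock : ∀ B ∈ π.parts, (B.card.factorial : ℝ) * cκ B.card
          = 2 * ((B.card - 1).factorial : ℝ) * κ (B.card / 2) := by
        intro B hB
        have hev := hπ.2 B hB
        have hpos : 0 < B.card := Finset.card_pos.2 (π.nonempty_of_mem_parts hB)
        have hmod : B.card % 2 = 0 := Nat.even_iff.1 hev
        have hcB : cκ B.card = κ (B.card / 2) / ((B.card / 2 : ℕ) : ℝ) := by
          rw [hcκ]
          exact if_pos ⟨by omega, hmod⟩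
        rw [hcB]
        have hfacB : (B.card.factorial : ℝ)
            = (B.card : ℝ) * ((B.card - 1).factorial : ℝ) := by
          exact_mod_cast congrArg (Nat.cast (R := ℝ)) (Nat.mul_factorial_pred hpos.ne').symm
        have hl0 : ((B.card / 2 : ℕ) : ℝ) ≠ 0 := by
          have hp : 0 < B.card / 2 := by omega
          exact_mod_cast hp.ne'
        have hcast : (B.card : ℝ) = 2 * ((B.card / 2 : ℕ) : ℝ) := by
          exact_mod_cast congrArg (Nat.cast (R := ℝ)) (show B.card = 2 * (B.card / 2) by omega)
        rw [hfacB, hcast]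
        field_simp
      rw [Finset.prod_congr rfl hblock, Finset.prod_mul_distrib, Finset.prod_mul_distrib,
        Finset.prod_const]
      try ring
    rw [Finset.sum_congr rfl hweight] at hmain
    rw [← hmain]
    field_simp
    try ring
  · -- cumulant formula
    have hflog : flog (coeffSeriesTU t u a) = evenSeries κ := by
      rw [← h]
      exact flog_fexp _ hces
    have hGc1 : PowerSeries.constantCoeff (coeffSeriesTU t u a) = 1 := by
      rw [← PowerSeries.coeff_zero_eq_constantCoeff_apply, coeffSeriesTU, PowerSeries.coeff_mk]
      simp
    have hmain := coeff_flog_eq (coeffSeriesTU t u a) hGc1 N hN1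
    rw [hflog] at hmain
    have hκco : PowerSeries.coeff N (evenSeries κ) = κ n / ((n : ℕ) : ℝ) := by
      have hcN : cκ N = κ (N / 2) / ((N / 2 : ℕ) : ℝ) := by
        rw [hcκ]
        exact if_pos ⟨by omega, hNmod⟩
      rw [hevmk, PowerSeries.coeff_mk, hcN, hNdiv]
    rw [hκco] at hmain
    have hG1 : ∀ j : ℕ, 1 ≤ j → PowerSeries.coeff j (coeffSeriesTU t u a - 1)
        = if j % 2 = 0 then a (j / 2) / (pochEval t (j / 2) * pochEval u (j / 2)) else 0 := by
      intro j hj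
      rw [map_sub, PowerSeries.coeff_one, if_neg (by omega), coeffSeriesTU,
        PowerSeries.coeff_mk, if_neg (by omega)]
      ring
    have hres : ∑ π ∈ (Finset.univ : Finset (Finpartition (Finset.univ : Finset (Fin N)))),
          ((-1:ℝ)^(π.parts.card - 1) * ((π.parts.card - 1).factorial : ℝ)) *
            ∏ B ∈ π.parts,
              ((B.card.factorial : ℝ) * PowerSeries.coeff B.card (coeffSeriesTU t u a - 1))
        = ∑ π ∈ evenPartitions N,
          ((-1:ℝ)^(π.parts.card - 1) * ((π.parts.card - 1).factorial : ℝ)) *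
            ∏ B ∈ π.parts,
              ((B.card.factorial : ℝ) * PowerSeries.coeff B.card (coeffSeriesTU t u a - 1)) := by
      symm
      refine Finset.sum_subset (fun π _ => Finset.mem_univ _) ?_
      intro π _ hπ
      have hnev : ¬ IsEvenPartition π := by
        intro hev
        exact hπ (by rw [evenPartitions, Finset.mem_filter]; exact ⟨Finset.mem_univ _, hev⟩)
      obtain ⟨B, hB, hodd⟩ : ∃ B ∈ π.parts, ¬ Even B.card := by
        by_contra hh
        push_neg at hh
        exact hnev hh
      have hpos : 0 < B.card := Finset.card_pos.2 (π.nonempty_of_mem_parts hB)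
      have hz : PowerSeries.coeff B.card (coeffSeriesTU t u a - 1) = 0 := by
        rw [hG1 B.card hpos]
        rw [Nat.even_iff] at hodd
        exact if_neg hodd
      rw [Finset.prod_eq_zero hB (by rw [hz, mul_zero]), mul_zero]
    rw [hres] at hmain
    have hweight : ∀ π ∈ evenPartitions N,
        ((-1:ℝ)^(π.parts.card - 1) * ((π.parts.card - 1).factorial : ℝ)) *
            ∏ B ∈ π.parts,
              ((B.card.factorial : ℝ) * PowerSeries.coeff B.card (coeffSeriesTU t u a - 1))
        = ((-1 : ℝ) ^ (π.parts.card - 1) * ((π.parts.card - 1).factorial : ℝ) *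
            ∏ B ∈ π.parts,
              (B.card.factorial : ℝ) / (pochEval t (B.card / 2) * pochEval u (B.card / 2))) *
            ∏ B ∈ π.parts, a (B.card / 2) := by
      intro π hπ
      rw [evenPartitions, Finset.mem_filter] at hπ
      have hblock : ∀ B ∈ π.parts,
          (B.card.factorial : ℝ) * PowerSeries.coeff B.card (coeffSeriesTU t u a - 1)
          = ((B.card.factorial : ℝ) / (pochEval t (B.card / 2) * pochEval u (B.card / 2))) *
              a (B.card / 2) := by
        intro B hB
        have hev := hπ.2 B hB
        have hpos : 0 < B.card := Finset.card_pos.2 (π.nonempty_of_mem_parts hB)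
        rw [hG1 B.card hpos, if_pos (Nat.even_iff.1 hev)]
        ring
      rw [Finset.prod_congr rfl hblock, Finset.prod_mul_distrib]
      ring
    rw [Finset.sum_congr rfl hweight] at hmain
    rw [← hmain]
    have hn0 : ((n : ℕ) : ℝ) ≠ 0 := Nat.cast_ne_zero.2 (by omega)
    have hNfac : ((N.factorial : ℕ) : ℝ) = ((N : ℕ) : ℝ) * (((N - 1).factorial : ℕ) : ℝ) := by
      exact_mod_cast congrArg (Nat.cast (R := ℝ)) (Nat.mul_factorial_pred (by omega)).symm
    have hNf1 : (((N - 1).factorial : ℕ) : ℝ) ≠ 0 := Nat.cast_ne_zero.2 (N - 1).factorial_ne_zero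
    rw [hNfac]
    have hNcast : ((N : ℕ) : ℝ) = 2 * ((n : ℕ) : ℝ) := by
      rw [hN]; push_cast; ring
    rw [hNcast]
    field_simp
end
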